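/- For positive integers a_1,…,a_g, it holds that Σ_{j=1}^g j·a_j³ ≥ (1/4)·(Σ_{j=1}^g a_j)³ / g. More precisely, Σ_{j=1}^g j·a_j³ ≥ (Σ_{j=1}^g a_j)³ / (Σ_{j=1}^g 1/√j)², and since Σ_{j=1}^g 1/√j ≤ 2√g and Σ a_j ≥ g, one has Σ_{j=1}^g j·a_j³ ≥ (1/4)·(Σ_{j=1}^g a_j)². -/

import Mathlib

open Finset

lemma sqrt_sum_le (n : ℕ) : ∑ j ∈ Finset.Icc 1 n, 1 / Real.sqrt j ≤ 2 * Real.sqrt n := by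
  induction n with
  | zero => simp
  | succ n ih =>
    rw [Finset.sum_Icc_succ_top (by omega)]
    have hx := Real.sqrt_nonneg (n : ℝ)
    have hy : (0:ℝ) < Real.sqrt (n+1) := Real.sqrt_pos.2 (by positivity)
    have hx2 : Real.sqrt (n:ℝ) ^ 2 = n := Real.sq_sqrt (by positivity)
    have hy2 : Real.sqrt ((n:ℝ)+1) ^ 2 = n + 1 := Real.sq_sqrt (by positivity)
    have hxy : Real.sqrt (n:ℝ) ≤ Real.sqrt ((n:ℝ)+1) := Real.sqrt_le_sqrt (by linarith)
    have key : 1 / Real.sqrt ((n:ℝ)+1) ≤ 2 * Real.sqrt ((n:ℝ)+1) - 2 * Real.sqrt (n:ℝ) := by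
      rw [div_le_iff₀ hy]
      nlinarith [sq_nonneg (Real.sqrt ((n:ℝ)+1) - Real.sqrt (n:ℝ))]
    push_cast
    push_cast at ih
    linarith

theorem stmt_11 (g : ℕ) (hg : 1 ≤ g) (a : ℕ → ℕ) (ha : ∀ j ∈ Finset.Icc 1 g, 1 ≤ a j) :
    ((∑ j ∈ Finset.Icc 1 g, (j : ℝ) * (a j : ℝ) ^ 3) ≥
        (∑ j ∈ Finset.Icc 1 g, (a j : ℝ)) ^ 3 /
          (∑ j ∈ Finset.Icc 1 g, 1 / Real.sqrt j) ^ 2) ∧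
    ((∑ j ∈ Finset.Icc 1 g, (j : ℝ) * (a j : ℝ) ^ 3) ≥
        (1 / 4) * (∑ j ∈ Finset.Icc 1 g, (a j : ℝ)) ^ 3 / g) ∧
    ((∑ j ∈ Finset.Icc 1 g, (j : ℝ) * (a j : ℝ) ^ 3) ≥
        (1 / 4) * (∑ j ∈ Finset.Icc 1 g, (a j : ℝ)) ^ 2) := by
  set S := Finset.Icc 1 g with hS
  have hne : S.Nonempty := ⟨1, Finset.mem_Icc.2 ⟨le_refl 1, hg⟩⟩
  have hjpos : ∀ j ∈ S, (0:ℝ) < j := by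
    intro j hj
    have := (Finset.mem_Icc.1 hj).1
    positivity
  have hBpos : 0 < ∑ j ∈ S, 1 / Real.sqrt j := by
    apply Finset.sum_pos _ hne
    intro j hj
    have := hjpos j hj
    positivity
  have hApos : 0 ≤ ∑ j ∈ S, (j : ℝ) * (a j : ℝ) ^ 3 := by positivity
  have hSpos : 0 ≤ ∑ j ∈ S, (a j : ℝ) := by positivity
  have hpq : Real.HolderConjugate 3 (3/2) := ⟨by norm_num, by norm_num, by norm_num⟩
  have hold := Real.inner_le_Lp_mul_Lq S
      (fun j => (j:ℝ) ^ ((1:ℝ)/3) * (a j : ℝ)) (fun j => (j:ℝ) ^ (-(1:ℝ)/3)) hpq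
  have E1 : ∑ x ∈ S, (x:ℝ) ^ ((1:ℝ)/3) * (a x : ℝ) * (x:ℝ) ^ (-(1:ℝ)/3)
      = ∑ x ∈ S, (a x : ℝ) := by
    refine Finset.sum_congr rfl fun j hj => ?_
    rw [mul_right_comm, ← Real.rpow_add (hjpos j hj)]
    norm_num
  have E2 : ∑ x ∈ S, |(x:ℝ) ^ ((1:ℝ)/3) * (a x : ℝ)| ^ (3:ℝ)
      = ∑ x ∈ S, (x : ℝ) * (a x : ℝ) ^ 3 := by
    refine Finset.sum_congr rfl fun j hj => ?_
    have h1 : (0:ℝ) ≤ (j:ℝ) ^ ((1:ℝ)/3) := Real.rpow_nonneg (hjpos j hj).le _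
    rw [abs_of_nonneg (by positivity), Real.mul_rpow h1 (by positivity),
        ← Real.rpow_mul (hjpos j hj).le,
        show ((1:ℝ)/3 * 3) = 1 by norm_num, Real.rpow_one,
        show (3:ℝ) = ((3:ℕ):ℝ) by norm_num, Real.rpow_natCast]
  have E3 : ∑ x ∈ S, |(x:ℝ) ^ (-(1:ℝ)/3)| ^ ((3:ℝ)/2)
      = ∑ x ∈ S, 1 / Real.sqrt x := by
    refine Finset.sum_congr rfl fun j hj => ?_
    have h0 : (0:ℝ) ≤ (j:ℝ) ^ (-(1:ℝ)/3) := Real.rpow_nonneg (hjpos j hj).le _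
    rw [abs_of_nonneg h0, ← Real.rpow_mul (hjpos j hj).le,
        show (-(1:ℝ)/3 * (3/2)) = -(1/2) by norm_num,
        Real.rpow_neg (hjpos j hj).le, Real.sqrt_eq_rpow]
    exact (one_div _).symm
  rw [E1, E2, E3] at hold
  set A := ∑ j ∈ S, (j : ℝ) * (a j : ℝ) ^ 3 with hA
  set B := ∑ j ∈ S, 1 / Real.sqrt j with hB
  set T := ∑ j ∈ S, (a j : ℝ) with hT
  have key : T ^ 3 ≤ A * B ^ 2 := by
    calc T ^ 3 ≤ (A ^ ((1:ℝ)/3) * B ^ ((1:ℝ)/(3/2))) ^ 3 :=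
          pow_le_pow_left₀ hSpos hold 3
      _ = A * B ^ 2 := by
          rw [mul_pow, ← Real.rpow_natCast (A ^ ((1:ℝ)/3)) 3,
              ← Real.rpow_natCast (B ^ ((1:ℝ)/(3/2))) 3,
              ← Real.rpow_mul hApos, ← Real.rpow_mul hBpos.le]
          norm_num
  have hB2 : (0:ℝ) < B ^ 2 := by positivity
  have c1 : T ^ 3 / B ^ 2 ≤ A := by
    rw [div_le_iff₀ hB2]
    exact key
  have hgpos : (0:ℝ) < g := by exact_mod_cast hg
  have hBle : B ≤ 2 * Real.sqrt g := sqrt_sum_le g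
  have hB4g : B ^ 2 ≤ 4 * g := by
    have h1 : B ^ 2 ≤ (2 * Real.sqrt g) ^ 2 := pow_le_pow_left₀ hBpos.le hBle 2
    have h2 : Real.sqrt (g:ℝ) ^ 2 = g := Real.sq_sqrt hgpos.le
    nlinarith
  have hT3 : (0:ℝ) ≤ T ^ 3 := by positivity
  have c2 : 1 / 4 * T ^ 3 / g ≤ A := by
    rw [div_le_iff₀ hgpos]
    nlinarith
  have hTg : (g:ℝ) ≤ T := by
    calc (g:ℝ) = ∑ _j ∈ S, (1:ℝ) := by
          rw [Finset.sum_const, hS, Nat.card_Icc]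
          simp
      _ ≤ T := Finset.sum_le_sum fun j hj => by exact_mod_cast ha j hj
  have c3 : 1 / 4 * T ^ 2 ≤ A := by
    refine le_trans ?_ c2
    rw [le_div_iff₀ hgpos]
    nlinarith [sq_nonneg T]
  exact ⟨c1, c2, c3⟩
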